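/- Let $D$ be a positive integer divisible by $4$ and let $a$ be an integer divisible by $4$. Then there exist integers $v_1, v_2$ with $\gcd(D, v_1) = \gcd(D, v_2) = 1$ such that either $(v_1 - 1)(v_2 - 1) \equiv a \pmod{D}$ or $(v_1 + 1)(v_2 - 1) \equiv a \pmod{D}$. -/

import Mathlib

lemma aux_small (P d : ℤ) (h1 : 0 < d) (h2 : d < P) : ¬ P ∣ d :=
  fun h => absurd (Int.le_of_dvd h1 h) (by omega)

lemma aux5 (P d : ℤ) (hP5 : 5 ≤ P) :
    ∃ r : ℤ, (¬ P ∣ r) ∧ (¬ P ∣ 2 * r + 1) ∧ (¬ P ∣ r + d) := by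
  by_cases h1 : P ∣ 1 + d
  · by_cases h5 : P ∣ (5 : ℤ)
    · refine ⟨3, aux_small P 3 (by norm_num) (by omega), ?_, ?_⟩
      · intro h7
        have hh : P ∣ (2 : ℤ) := by
          have := dvd_sub h7 h5
          have he : 2 * 3 + 1 - 5 = (2 : ℤ) := by norm_num
          rwa [he] at this
        exact aux_small P 2 (by norm_num) (by omega) hh
      · intro h3d
        have hh : P ∣ (2 : ℤ) := by
          have := dvd_sub h3d h1
          have he : 3 + d - (1 + d) = (2 : ℤ) := by ring
          rwa [he] at this
        exact aux_small P 2 (by norm_num) (by omega) hh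
    · refine ⟨2, aux_small P 2 (by norm_num) (by omega), ?_, ?_⟩
      · intro h; exact h5 (by norm_num at h; exact h)
      · intro h2d
        have hh : P ∣ (1 : ℤ) := by
          have := dvd_sub h2d h1
          have he : 2 + d - (1 + d) = (1 : ℤ) := by ring
          rwa [he] at this
        exact aux_small P 1 (by norm_num) (by omega) hh
  · refine ⟨1, aux_small P 1 (by norm_num) (by omega), ?_, h1⟩
    intro h
    exact aux_small P 3 (by norm_num) (by omega) (by norm_num at h; exact h)

lemma key (f : ℤ → ℤ) (hf : ∀ P u v : ℤ, P ∣ u - v → P ∣ f u - f v) :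
    ∀ n : ℕ, 0 < n → (∀ p : ℕ, p.Prime → p ∣ n → ∃ r : ℤ, ¬ (p : ℤ) ∣ f r) →
      ∃ u : ℤ, ∀ p : ℕ, p.Prime → p ∣ n → ¬ (p : ℤ) ∣ f u := by
  intro n
  induction n using Nat.strong_induction_on with
  | _ n ih =>
    intro hn hloc
    by_cases h1 : n = 1
    · subst h1
      exact ⟨0, fun p hp hpn => absurd (Nat.dvd_one.mp hpn) hp.ne_one⟩
    · have hp : (n.minFac).Prime := Nat.minFac_prime h1
      set p := n.minFac with hpdef
      have hpn : p ∣ n := Nat.minFac_dvd n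
      set m := ordCompl[p] n with hmdef
      have hmdvd : m ∣ n := Nat.ordCompl_dvd n p
      have hpm : ¬ p ∣ m := Nat.not_dvd_ordCompl hp hn.ne'
      have hmpos : 0 < m := Nat.ordCompl_pos p hn.ne'
      have hsplit : p ^ n.factorization p * m = n := Nat.ordProj_mul_ordCompl_eq_self n p
      have hk1 : 1 ≤ n.factorization p := (Nat.Prime.factorization_pos_of_dvd hp hn.ne' hpn)
      have hmlt : m < n := by
        have hpk : 2 ≤ p ^ n.factorization p := by
          calc 2 ≤ p := hp.two_le
          _ ≤ p ^ n.factorization p := Nat.le_self_pow (by omega) p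
        nlinarith
      obtain ⟨u₂, hu₂⟩ := ih m hmlt hmpos (fun q hq hqm => hloc q hq (hqm.trans hmdvd))
      obtain ⟨r, hr⟩ := hloc p hp hpn
      have hco : IsCoprime (p : ℤ) (m : ℤ) :=
        Nat.isCoprime_iff_coprime.mpr ((Nat.Prime.coprime_iff_not_dvd hp).mpr hpm)
      obtain ⟨x, y, hxy⟩ := hco
      refine ⟨r * (y * m) + u₂ * (x * p), fun q hq hqn => ?_⟩
      by_cases hqp : q = p
      · have hdr : ((p : ℕ) : ℤ) ∣ (r * (y * (m : ℤ)) + u₂ * (x * (p : ℤ))) - r :=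
          ⟨(u₂ - r) * x, by linear_combination r * hxy⟩
        intro hdvd
        rw [hqp] at hdvd
        have hfd := hf p _ r hdr
        exact hr (by have h2 := dvd_sub hdvd hfd; simpa using h2)
      · have hqm : q ∣ m := by
          have hqn' : q ∣ p ^ n.factorization p * m := by rwa [hsplit]
          rcases (Nat.Prime.dvd_mul hq).mp hqn' with h | h
          · exact absurd ((Nat.prime_dvd_prime_iff_eq hq hp).mp (hq.dvd_of_dvd_pow h)) hqp
          · exact h
        have hdm : (m : ℤ) ∣ (r * (y * m) + u₂ * (x * p)) - u₂ :=
          ⟨(r - u₂) * y, by linear_combination u₂ * hxy⟩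
        have hdr : (q : ℤ) ∣ (r * (y * m) + u₂ * (x * p)) - u₂ :=
          dvd_trans (Int.natCast_dvd_natCast.mpr hqm) hdm
        intro hdvd
        have hfd := hf q _ u₂ hdr
        exact hu₂ q hq hqm (by have h2 := dvd_sub hdvd hfd; simpa using h2)

theorem stmt1 (D a : ℤ) (hD : 0 < D) (hD4 : 4 ∣ D) (ha : 4 ∣ a) :
    ∃ v₁ v₂ : ℤ, Int.gcd D v₁ = 1 ∧ Int.gcd D v₂ = 1 ∧
      ((v₁ - 1) * (v₂ - 1) ≡ a [ZMOD D] ∨ (v₁ + 1) * (v₂ - 1) ≡ a [ZMOD D]) := by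
  obtain ⟨b, rfl⟩ := ha
  set n := D.toNat with hn
  have hDn : (n : ℤ) = D := Int.toNat_of_nonneg hD.le
  have hn0 : 0 < n := by omega
  obtain ⟨ε, hε, hε3⟩ : ∃ ε : ℤ, (ε = 1 ∨ ε = -1) ∧ ¬ (3 : ℤ) ∣ ε * (2 * b) - 1 := by
    by_cases h : (2 * b) % 3 = 1
    · exact ⟨-1, Or.inr rfl, by omega⟩
    · exact ⟨1, Or.inl rfl, by omega⟩
  have hf : ∀ P u v : ℤ, P ∣ u - v →
      P ∣ u * ((2 * u + 1) * (ε * u + 2 * b)) - v * ((2 * v + 1) * (ε * v + 2 * b)) := by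
    intro P u v h
    have h' : v ≡ u [ZMOD P] := Int.modEq_iff_dvd.mpr h
    have h2 := (h'.mul ((((h'.mul_left 2).add_right 1)).mul
      ((h'.mul_left ε).add_right (2 * b))))
    exact Int.ModEq.dvd h2
  have hloc : ∀ p : ℕ, p.Prime → p ∣ n →
      ∃ r : ℤ, ¬ (p : ℤ) ∣ r * ((2 * r + 1) * (ε * r + 2 * b)) := by
    intro p hp hpn
    by_cases hp2 : p = 2
    · subst hp2
      refine ⟨1, ?_⟩
      rcases hε with rfl | rfl <;>
        · intro h; push_cast at h; ring_nf at h; omega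
    by_cases hp3 : p = 3
    · subst hp3
      refine ⟨2, ?_⟩
      rcases hε with rfl | rfl <;>
        · intro h; push_cast at h; ring_nf at h hε3; omega
    have h4 : p ≠ 4 := by rintro rfl; norm_num at hp
    have hp5 : 5 ≤ p := by have := hp.two_le; omega
    have hP5 : (5 : ℤ) ≤ (p : ℤ) := by exact_mod_cast hp5
    have hPp : Prime (p : ℤ) := Nat.prime_iff_prime_int.mp hp
    rcases hε with rfl | rfl
    · obtain ⟨r, hr1, hr2, hr3⟩ := aux5 (p : ℤ) (2 * b) hP5
      refine ⟨r, fun hd => ?_⟩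
      rcases hPp.dvd_mul.mp hd with h | h
      · exact hr1 h
      rcases hPp.dvd_mul.mp h with h | h
      · exact hr2 h
      · exact hr3 (by rwa [show (1 : ℤ) * r + 2 * b = r + 2 * b by ring] at h)
    · obtain ⟨r, hr1, hr2, hr3⟩ := aux5 (p : ℤ) (-(2 * b)) hP5
      refine ⟨r, fun hd => ?_⟩
      rcases hPp.dvd_mul.mp hd with h | h
      · exact hr1 h
      rcases hPp.dvd_mul.mp h with h | h
      · exact hr2 h
      · refine hr3 ?_
        rw [show r + -(2 * b) = -((-1) * r + 2 * b) by ring]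
        exact dvd_neg.mpr h
  obtain ⟨u, hu⟩ := key (fun u => u * ((2 * u + 1) * (ε * u + 2 * b))) hf n hn0 hloc
  have hu' : ∀ p : ℕ, p.Prime → p ∣ n →
      ¬ (p : ℤ) ∣ u * ((2 * u + 1) * (ε * u + 2 * b)) := hu
  have hgcd : IsCoprime D (u * ((2 * u + 1) * (ε * u + 2 * b))) := by
    rw [Int.isCoprime_iff_gcd_eq_one]
    by_contra hg
    have hq := Nat.minFac_prime hg
    have hd1 : ((Int.gcd D (u * ((2 * u + 1) * (ε * u + 2 * b)))).minFac : ℤ) ∣ D :=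
      dvd_trans (Int.natCast_dvd_natCast.mpr (Nat.minFac_dvd _)) (Int.gcd_dvd_left _ _)
    have hd2 : ((Int.gcd D (u * ((2 * u + 1) * (ε * u + 2 * b)))).minFac : ℤ) ∣
        u * ((2 * u + 1) * (ε * u + 2 * b)) :=
      dvd_trans (Int.natCast_dvd_natCast.mpr (Nat.minFac_dvd _)) (Int.gcd_dvd_right _ _)
    refine hu' _ hq ?_ hd2
    have hd1' : ((Int.gcd D (u * ((2 * u + 1) * (ε * u + 2 * b)))).minFac : ℤ) ∣ (n : ℤ) := by
      rw [hDn]; exact hd1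
    exact_mod_cast hd1'
  have hcu : IsCoprime D u := hgcd.of_mul_right_left
  have h23 : IsCoprime D ((2 * u + 1) * (ε * u + 2 * b)) := hgcd.of_mul_right_right
  have hc2 : IsCoprime D (2 * u + 1) := h23.of_mul_right_left
  have hc3 : IsCoprime D (ε * u + 2 * b) := h23.of_mul_right_right
  obtain ⟨s, t, hst⟩ := hcu
  refine ⟨ε + 2 * b * t, 2 * u + 1, ?_, ?_, ?_⟩
  · rw [← Int.isCoprime_iff_gcd_eq_one]
    have h := hc3.add_mul_left_right (-(2 * b * s))
    have heq : ε * u + 2 * b + D * -(2 * b * s) = (ε + 2 * b * t) * u := by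
      linear_combination (-(2 * b)) * hst
    rw [heq] at h
    exact h.of_mul_right_left
  · rw [← Int.isCoprime_iff_gcd_eq_one]; exact hc2
  · rcases hε with rfl | rfl
    · left
      refine Int.modEq_iff_dvd.mpr ⟨4 * b * s, ?_⟩
      linear_combination (-(4 * b)) * hst
    · right
      refine Int.modEq_iff_dvd.mpr ⟨4 * b * s, ?_⟩
      linear_combination (-(4 * b)) * hst
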